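/- Let G be a finite inverse semi-rational group, let p be an odd prime, and suppose a Sylow p-subgroup P of G is cyclic. Then |P| ≤ p. -/

import Mathlib

section helpers
variable {G : Type*} [Group G] {x : G} {n : ℕ}

lemma pow_val_mul (hx : orderOf x = n) [NeZero n] (a b : (ZMod n)ˣ) :
    (x ^ ((a : ZMod n).val)) ^ ((b : ZMod n).val) = x ^ (((a * b : (ZMod n)ˣ) : ZMod n).val) := by
  rw [← pow_mul, pow_eq_pow_iff_modEq, hx, Units.val_mul, ZMod.val_mul]
  exact (Nat.mod_modEq _ n).symm

lemma pow_val_eq_self_iff (hx : orderOf x = n) (hn : 1 < n) (a : (ZMod n)ˣ) :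
    x ^ ((a : ZMod n).val) = x ↔ a = 1 := by
  haveI : NeZero n := ⟨by omega⟩
  haveI : Fact (1 < n) := ⟨hn⟩
  constructor
  · intro hxa
    have h1 : (a : ZMod n).val ≡ 1 [MOD n] := by
      have := pow_eq_pow_iff_modEq.mp (hxa.trans (pow_one x).symm)
      rwa [hx] at this
    have hlt : (a : ZMod n).val < n := ZMod.val_lt _
    have hv : (a : ZMod n).val = 1 := by
      unfold Nat.ModEq at h1
      rw [Nat.mod_eq_of_lt hlt, Nat.mod_eq_of_lt hn] at h1
      exact h1
    exact Units.ext (ZMod.val_injective n (by rw [hv, Units.val_one, ZMod.val_one]))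
  · rintro rfl
    rw [Units.val_one, ZMod.val_one, pow_one]

lemma pow_val_neg (hx : orderOf x = n) [NeZero n] (w : (ZMod n)ˣ) :
    x ^ (((-w : (ZMod n)ˣ) : ZMod n).val) = (x ^ ((w : ZMod n).val))⁻¹ := by
  apply eq_inv_of_mul_eq_one_left
  rw [← pow_add, ← orderOf_dvd_iff_pow_eq_one, hx]
  have : ((((-w : (ZMod n)ˣ) : ZMod n).val + ((w : ZMod n).val) : ℕ) : ZMod n) = 0 := by
    push_cast
    rw [ZMod.natCast_rightInverse _, ZMod.natCast_rightInverse _]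
    simp
  exact (ZMod.natCast_eq_zero_iff _ n).mp this

lemma conj_pow_iter (hx : orderOf x = n) (hn : 1 < n) {c : G} {w : (ZMod n)ˣ}
    (hc : c⁻¹ * x * c = x ^ ((w : ZMod n).val)) :
    ∀ k : ℕ, (c⁻¹) ^ k * x * c ^ k = x ^ (((w ^ k : (ZMod n)ˣ) : ZMod n).val) := by
  haveI : NeZero n := ⟨by omega⟩
  haveI : Fact (1 < n) := ⟨hn⟩
  intro k
  induction k with
  | zero => simp [ZMod.val_one]
  | succ k ih =>
    have e1 : (c⁻¹) ^ (k + 1) * x * c ^ (k + 1) = c⁻¹ * ((c⁻¹) ^ k * x * c ^ k) * c := by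
      rw [pow_succ, pow_succ']
      group
    rw [e1, ih]
    have e2 : c⁻¹ * x ^ (((w ^ k : (ZMod n)ˣ) : ZMod n).val) * c
        = (c⁻¹ * x * c) ^ (((w ^ k : (ZMod n)ˣ) : ZMod n).val) := by
      have := conj_pow (a := c⁻¹) (b := x) (i := ((w ^ k : (ZMod n)ˣ) : ZMod n).val)
      rw [inv_inv] at this
      exact this.symm
    rw [e2, hc, pow_val_mul hx, ← pow_succ']

lemma conj_inv_exp (hx : orderOf x = n) (hn : 1 < n) {c : G} {w : (ZMod n)ˣ}
    (hc : c⁻¹ * x * c = x ^ ((w : ZMod n).val)) :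
    c * x * c⁻¹ = x ^ (((w⁻¹ : (ZMod n)ˣ) : ZMod n).val) := by
  haveI : NeZero n := ⟨by omega⟩
  haveI : Fact (1 < n) := ⟨hn⟩
  have h1 : c⁻¹ * x ^ (((w⁻¹ : (ZMod n)ˣ) : ZMod n).val) * c = x := by
    have e2 : c⁻¹ * x ^ (((w⁻¹ : (ZMod n)ˣ) : ZMod n).val) * c
        = (c⁻¹ * x * c) ^ (((w⁻¹ : (ZMod n)ˣ) : ZMod n).val) := by
      have := conj_pow (a := c⁻¹) (b := x) (i := ((w⁻¹ : (ZMod n)ˣ) : ZMod n).val)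
      rw [inv_inv] at this
      exact this.symm
    rw [e2, hc, pow_val_mul hx, mul_inv_cancel, Units.val_one, ZMod.val_one, pow_one]
  calc c * x * c⁻¹ = c * (c⁻¹ * x ^ (((w⁻¹ : (ZMod n)ˣ) : ZMod n).val) * c) * c⁻¹ := by rw [h1]
    _ = x ^ (((w⁻¹ : (ZMod n)ˣ) : ZMod n).val) := by group

/-- The subgroup of units `u` such that `x ^ u` is conjugate to `x`. -/
def conjExpSubgroup (x : G) (n : ℕ) (hx : orderOf x = n) (hn : 1 < n) : Subgroup (ZMod n)ˣ := by
  haveI : NeZero n := ⟨by omega⟩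
  haveI : Fact (1 < n) := ⟨hn⟩
  exact
  { carrier := {u : (ZMod n)ˣ | IsConj (x ^ ((u : ZMod n).val)) x}
    one_mem' := by
      simp only [Set.mem_setOf_eq, Units.val_one, ZMod.val_one, pow_one]
      exact IsConj.refl x
    mul_mem' := by
      intro a b ha hb
      simp only [Set.mem_setOf_eq] at *
      obtain ⟨c, hc⟩ := isConj_iff.mp ha
      have h1 : c * (x ^ ((a : ZMod n).val)) ^ ((b : ZMod n).val) * c⁻¹ = x ^ ((b : ZMod n).val) := by
        have h0 := (conj_pow (a := c) (b := x ^ ((a : ZMod n).val)) (i := ((b : ZMod n).val))).symm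
        rwa [hc] at h0
      rw [pow_val_mul hx] at h1
      exact (isConj_iff.mpr ⟨c, h1⟩).trans hb
    inv_mem' := by
      intro a ha
      simp only [Set.mem_setOf_eq] at *
      obtain ⟨c, hc⟩ := isConj_iff.mp ha
      have h1 : c * (x ^ ((a : ZMod n).val)) ^ (((a⁻¹ : (ZMod n)ˣ) : ZMod n).val) * c⁻¹
          = x ^ (((a⁻¹ : (ZMod n)ˣ) : ZMod n).val) := by
        have h0 := (conj_pow (a := c) (b := x ^ ((a : ZMod n).val))
          (i := (((a⁻¹ : (ZMod n)ˣ) : ZMod n).val))).symm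
        rwa [hc] at h0
      rw [pow_val_mul hx, mul_inv_cancel, Units.val_one, ZMod.val_one, pow_one] at h1
      exact isConj_iff.mpr ⟨c⁻¹, by rw [← h1]; group⟩ }

lemma mem_conjExpSubgroup_iff (hx : orderOf x = n) (hn : 1 < n) (u : (ZMod n)ˣ) :
    u ∈ conjExpSubgroup x n hx hn ↔ IsConj (x ^ ((u : ZMod n).val)) x := Iff.rfl

end helpers

/-- An element `x` of a group is inverse semi-rational if for every integer `j`
coprime to the order of `x`, `x ^ j` is conjugate to `x` or to `x⁻¹`. -/
def IsInvSemiRationalElem {G : Type*} [Group G] (x : G) : Prop :=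
  ∀ j : ℤ, Int.gcd j (orderOf x) = 1 → IsConj (x ^ j) x ∨ IsConj (x ^ j) x⁻¹

/-- A group is inverse semi-rational if all its elements are. -/
def IsInvSemiRational (G : Type*) [Group G] : Prop :=
  ∀ x : G, IsInvSemiRationalElem x

theorem stmt_11 {G : Type*} [Group G] [Finite G] (h : IsInvSemiRational G)
    (p : ℕ) [Fact p.Prime] (hp : Odd p) (P : Sylow p G)
    (hcyc : IsCyclic P) : Nat.card P ≤ p := by
  by_contra hle
  push_neg at hle
  have hp' : p.Prime := Fact.out
  have hp3 : 3 ≤ p := by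
    have h2 := hp'.two_le
    have := Nat.odd_iff.mp hp
    omega
  obtain ⟨f, hcard⟩ : ∃ f, Nat.card P = p ^ f := ⟨_, Sylow.card_eq_multiplicity P⟩
  set n : ℕ := Nat.card P with hn_def
  have hn1 : 1 < n := lt_trans hp'.one_lt hle
  haveI : NeZero n := ⟨by omega⟩
  haveI : Fact (1 < n) := ⟨hn1⟩
  have hf2 : 2 ≤ f := by
    by_contra hcon
    push_neg at hcon
    interval_cases f
    · rw [pow_zero] at hcard; omega
    · rw [pow_one] at hcard; omega
  -- generator of P
  obtain ⟨g, hg⟩ := hcyc.exists_generator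
  have hgord : orderOf g = n := by
    rw [← Nat.card_zpowers, (Subgroup.eq_top_iff' _).mpr hg]
    exact Subgroup.card_top
  set x : G := (g : G) with hx_def
  have hx : orderOf x = n := by
    rw [← hgord]
    exact orderOf_injective P.toSubgroup.subtype P.toSubgroup.subtype_injective g
  set S := conjExpSubgroup x n hx hn1 with hS_def
  -- coverage
  have hcov : ∀ w : (ZMod n)ˣ, w ∈ S ∨ -w ∈ S := by
    intro w
    have hcop : Int.gcd (((w : ZMod n).val : ℕ) : ℤ) (orderOf x) = 1 := by
      rw [hx]
      exact_mod_cast ZMod.val_coe_unit_coprime w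
    rcases h x (((w : ZMod n).val : ℕ) : ℤ) hcop with hc | hc
    · left
      rw [mem_conjExpSubgroup_iff]
      rwa [zpow_natCast] at hc
    · right
      rw [mem_conjExpSubgroup_iff, pow_val_neg hx]
      rw [zpow_natCast] at hc
      obtain ⟨c, hc'⟩ := isConj_iff.mp hc
      refine isConj_iff.mpr ⟨c, ?_⟩
      rw [show c * (x ^ ((w : ZMod n).val))⁻¹ * c⁻¹ = (c * x ^ ((w : ZMod n).val) * c⁻¹)⁻¹ by group,
        hc', inv_inv]
  -- counting
  have hcount : Nat.card (ZMod n)ˣ ≤ 2 * Nat.card S := by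
    have huniv : (Set.univ : Set (ZMod n)ˣ) ⊆ (S : Set (ZMod n)ˣ) ∪ (fun w => -w) '' (S : Set (ZMod n)ˣ) := by
      intro w _
      rcases hcov w with h1 | h1
      · exact Or.inl h1
      · exact Or.inr ⟨-w, h1, neg_neg w⟩
    have h2 := Set.ncard_le_ncard huniv (Set.toFinite _)
    rw [Set.ncard_univ] at h2
    have h3 := Set.ncard_union_le (S : Set (ZMod n)ˣ) ((fun w => -w) '' (S : Set (ZMod n)ˣ))
    have h4 := Set.ncard_image_le (s := (S : Set (ZMod n)ˣ)) (f := fun w => -w) (Set.toFinite _)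
    have h5 : (S : Set (ZMod n)ˣ).ncard = Nat.card S := (Nat.card_coe_set_eq _).symm
    omega
  -- p divides card S
  have hU : Nat.card (ZMod n)ˣ = p ^ (f - 1) * (p - 1) := by
    rw [Nat.card_eq_fintype_card, ZMod.card_units_eq_totient]
    show n.totient = _
    rw [hcard]
    exact Nat.totient_prime_pow hp' (by omega)
  have hpS : p ∣ Nat.card S := by
    obtain ⟨k, hk⟩ := Subgroup.card_subgroup_dvd_card S
    have hSpos : 0 < Nat.card S := Nat.card_pos
    have hUpos : 0 < Nat.card (ZMod n)ˣ := Nat.card_pos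
    have hk2 : k ≤ 2 := by
      rw [hk] at hcount
      exact Nat.le_of_mul_le_mul_left (by linarith [hcount]) hSpos
    have hpU : p ∣ Nat.card (ZMod n)ˣ := by
      rw [hU]
      exact Dvd.dvd.mul_right (dvd_pow_self p (by omega)) _
    rw [hk] at hpU
    rcases (Nat.Prime.dvd_mul hp').mp hpU with h1 | h1
    · exact h1
    · exfalso
      have hk0 : k ≠ 0 := by
        intro h0
        rw [h0, mul_zero] at hk
        omega
      have := Nat.le_of_dvd (by omega) h1
      omega
  -- Cauchy
  haveI : Fintype S := Fintype.ofFinite _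
  obtain ⟨u, hu⟩ := exists_prime_orderOf_dvd_card (G := S) p (by rwa [← Nat.card_eq_fintype_card])
  set w : (ZMod n)ˣ := (u : (ZMod n)ˣ) with hw_def
  have hword : orderOf w = p := by
    rw [← hu]
    exact orderOf_injective S.subtype S.subtype_injective u
  have hwS : IsConj (x ^ ((w : ZMod n).val)) x := u.2
  obtain ⟨c, hc⟩ := isConj_iff.mp hwS
  have hc' : c⁻¹ * x * c = x ^ ((w : ZMod n).val) := by
    have h0 := congrArg (fun y => c⁻¹ * y * c) hc
    beta_reduce at h0
    rw [← h0]
    group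
  set m := orderOf c with hm_def
  have hm0 : m ≠ 0 := (orderOf_pos c).ne'
  have hiter := conj_pow_iter hx hn1 hc'
  have hwm : w ^ m = 1 := by
    apply (pow_val_eq_self_iff hx hn1 (w ^ m)).mp
    have := (hiter m).symm
    rwa [inv_pow, pow_orderOf_eq_one, inv_one, one_mul, mul_one] at this
  have hpm : p ∣ m := hword ▸ orderOf_dvd_of_pow_eq_one hwm
  set a := m.factorization p with ha_def
  set m' := m / p ^ a with hm'_def
  have hcop' : Nat.Coprime p m' := Nat.coprime_ordCompl hp' hm0
  have hm'dvd : m' ∣ m := Nat.div_dvd_of_dvd (Nat.ordProj_dvd m p)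
  set hh := c ^ m' with hh_def
  set v := w ^ m' with hv_def
  have hvord : orderOf v = p := by
    rw [hv_def, orderOf_pow, hword, Nat.Coprime.gcd_eq_one hcop', Nat.div_one]
  have hvne : v ≠ 1 := by
    intro h1
    rw [h1, orderOf_one] at hvord
    omega
  have hhx : hh⁻¹ * x * hh = x ^ ((v : ZMod n).val) := by
    have := hiter m'
    rwa [inv_pow] at this
  have hhord : orderOf hh = p ^ a := by
    rw [hh_def, orderOf_pow, ← hm_def, Nat.gcd_eq_right hm'dvd, hm'_def,
      Nat.div_div_self (Nat.ordProj_dvd m p) hm0]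
  -- hh normalizes zpowers x
  have hhx' : hh * x * hh⁻¹ = x ^ (((v⁻¹ : (ZMod n)ˣ) : ZMod n).val) := conj_inv_exp hx hn1 hhx
  have hnorm : hh ∈ Subgroup.normalizer (Subgroup.zpowers x : Set G) := by
    rw [Subgroup.mem_normalizer_iff]
    intro y
    constructor
    · intro hy
      obtain ⟨k, hk⟩ := Subgroup.mem_zpowers_iff.mp hy
      rw [← hk, show hh * x ^ k * hh⁻¹ = (hh * x * hh⁻¹) ^ k from (conj_zpow).symm, hhx',
        ← zpow_natCast, ← zpow_mul]
      exact Subgroup.zpow_mem _ (Subgroup.mem_zpowers x) _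
    · intro hy
      obtain ⟨k, hk⟩ := Subgroup.mem_zpowers_iff.mp hy
      have hy' : y = hh⁻¹ * x ^ k * hh := by rw [hk]; group
      rw [hy']
      have e3 : hh⁻¹ * x ^ k * hh = (hh⁻¹ * x * hh) ^ k := by
        have := conj_zpow (i := k) (a := hh⁻¹) (b := x)
        rw [inv_inv] at this
        exact this.symm
      rw [e3, hhx, ← zpow_natCast, ← zpow_mul]
      exact Subgroup.zpow_mem _ (Subgroup.mem_zpowers x) _
  -- the join is a p-group
  have hQ : IsPGroup p ↥(Subgroup.zpowers hh ⊔ Subgroup.zpowers x) :=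
    IsPGroup.to_sup_of_normal_right'
      (IsPGroup.of_card (n := a) (by rw [Nat.card_zpowers, hhord]))
      (IsPGroup.of_card (n := f) (by rw [Nat.card_zpowers, hx, hcard]))
      (Subgroup.zpowers_le.mpr hnorm)
  obtain ⟨P', hP'⟩ := hQ.exists_le_sylow
  have hPP' : Nat.card P' = n := by
    rw [Sylow.card_eq_multiplicity P', ← Sylow.card_eq_multiplicity P]
  have hle1 : Nat.card ↥(Subgroup.zpowers hh ⊔ Subgroup.zpowers x) ≤ n := by
    rw [← hPP']
    exact Subgroup.card_le_of_le hP'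
  have hge : n ≤ Nat.card ↥(Subgroup.zpowers hh ⊔ Subgroup.zpowers x) := by
    have := Subgroup.card_le_of_le (le_sup_right (a := Subgroup.zpowers hh) (b := Subgroup.zpowers x))
    rwa [Nat.card_zpowers, hx] at this
  have heq : Subgroup.zpowers x = Subgroup.zpowers hh ⊔ Subgroup.zpowers x := by
    refine Subgroup.eq_of_le_of_card_ge le_sup_right ?_
    rw [Nat.card_zpowers, hx]
    exact hle1
  have hmem : hh ∈ Subgroup.zpowers x := by
    rw [heq]
    exact (le_sup_left : Subgroup.zpowers hh ≤ _) (Subgroup.mem_zpowers hh)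
  obtain ⟨k, hk⟩ := Subgroup.mem_zpowers_iff.mp hmem
  have hcomm : hh⁻¹ * x * hh = x := by rw [← hk]; group
  rw [hhx] at hcomm
  exact hvne ((pow_val_eq_self_iff hx hn1 v).mp hcomm)
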